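/- arXiv:math-ph/0701031 — 4 statements merged into one kernel-verified Lean document; each statement's English description precedes it below -/
import Mathlib

section
/- Let H be a complex separable Hilbert space, let M be a POV measure on a measurable space (X, 𝒜), let P be a PV measure on a measurable space (Y, ℬ), and let ν be a weak Markov kernel with respect to M such that P = ν∘M. Then ℛ(P) ⊆ ℛ(M), i.e. for every B ∈ ℬ there exists A ∈ 𝒜 with P(B) = M(A). -/
open MeasureTheory ComplexOrder
open scoped Classical

noncomputable section

variable {H : Type*} [NormedAddCommGroup H] [InnerProductSpace ℂ H] [CompleteSpace H]

/-- A (normalized) positive operator valued measure on the measurable space `X`: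
`0 ≤ M A ≤ 1`, `M ∅ = 0`, `M univ = 1`, and `M` is weakly σ-additive. -/
structure IsPOVM {X : Type*} [MeasurableSpace X] (M : Set X → (H →L[ℂ] H)) : Prop where
  pos : ∀ A : Set X, MeasurableSet A → (M A).IsPositive
  le_one : ∀ A : Set X, MeasurableSet A → ((1 : H →L[ℂ] H) - M A).IsPositive
  empty : M ∅ = 0
  univ : M Set.univ = 1
  m_iUnion : ∀ (ψ : H) (A : ℕ → Set X), (∀ n, MeasurableSet (A n)) →
    Pairwise (Function.onFun Disjoint A) →
    HasSum (fun n => (inner ℂ ψ (M (A n) ψ) : ℂ)) (inner ℂ ψ (M (⋃ n, A n) ψ))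

/-- A projection valued (PV) measure: a POV measure whose values are orthogonal
projections (self-adjointness is part of positivity). -/
def IsPVM {X : Type*} [MeasurableSpace X] (M : Set X → (H →L[ℂ] H)) : Prop :=
  IsPOVM M ∧ ∀ A : Set X, MeasurableSet A → M A * M A = M A

/-- The finite measure `μ_ψ^M (A) = ⟨ψ, M(A) ψ⟩` associated to a POV measure `M`
and a vector `ψ`. (Junk value `0` if `M` is not a POV measure.) -/
def vecMeasure {X : Type*} [MeasurableSpace X] (M : Set X → (H →L[ℂ] H)) (ψ : H) :
    Measure X :=
  if hM : IsPOVM M then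
    Measure.ofMeasurable (fun A _ => ENNReal.ofReal (inner ℂ ψ (M A ψ) : ℂ).re)
      (by simp [hM.empty])
      (by
        intro A hA hd
        have h := hM.m_iUnion ψ A hA hd
        have hre : HasSum (fun n => ((inner ℂ ψ (M (A n) ψ) : ℂ)).re)
            ((inner ℂ ψ (M (⋃ n, A n) ψ) : ℂ)).re := h.mapL Complex.reCLM
        have hnn : ∀ n, 0 ≤ ((inner ℂ ψ (M (A n) ψ) : ℂ)).re := by
          intro n
          have h2 := (hM.pos (A n) (hA n)).2 ψ
          rw [ContinuousLinearMap.reApplyInnerSelf] at h2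
          simpa [inner_re_symm] using h2
        try dsimp only
        rw [← hre.tsum_eq]
        exact ENNReal.ofReal_tsum_of_nonneg hnn hre.summable)
  else 0

/-- `ν : X × ℬ → ℝ` is a weak Markov kernel with respect to the POV measure `M`. -/
def IsWeakMarkovKernel {X Y : Type*} [MeasurableSpace X] [MeasurableSpace Y]
    (M : Set X → (H →L[ℂ] H)) (ν : X → Set Y → ℝ) : Prop :=
  (∀ B : Set Y, MeasurableSet B → Measurable fun x => ν x B) ∧
  ∀ ψ : H,
    (∀ B : Set Y, MeasurableSet B →
      ∀ᵐ x ∂(vecMeasure M ψ), 0 ≤ ν x B ∧ ν x B ≤ 1) ∧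
    (∀ᵐ x ∂(vecMeasure M ψ), ν x Set.univ = 1) ∧
    (∀ᵐ x ∂(vecMeasure M ψ), ν x ∅ = 0) ∧
    (∀ B : ℕ → Set Y, (∀ n, MeasurableSet (B n)) → Pairwise (Function.onFun Disjoint B) →
      ∀ᵐ x ∂(vecMeasure M ψ), HasSum (fun n => ν x (B n)) (ν x (⋃ n, B n)))

/-- `F = ν ∘ M` : the POV measure `F` is the smearing of `M` with respect to `ν`. -/
def IsSmearing {X Y : Type*} [MeasurableSpace X] [MeasurableSpace Y]
    (M : Set X → (H →L[ℂ] H)) (ν : X → Set Y → ℝ) (F : Set Y → (H →L[ℂ] H)) : Prop :=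
  ∀ B : Set Y, MeasurableSet B → ∀ ψ : H,
    (inner ℂ ψ (F B ψ) : ℂ) = ((∫ x, ν x B ∂(vecMeasure M ψ) : ℝ) : ℂ)

/-- A weak Markov kernel has values in `{0,1}`. -/
def HasZeroOneValues {X Y : Type*} [MeasurableSpace X] [MeasurableSpace Y]
    (M : Set X → (H →L[ℂ] H)) (ν : X → Set Y → ℝ) : Prop :=
  ∀ B : Set Y, MeasurableSet B → ∀ ψ : H,
    ∀ᵐ x ∂(vecMeasure M ψ), ν x B = 0 ∨ ν x B = 1


section Aux

variable {H : Type*} [NormedAddCommGroup H] [InnerProductSpace ℂ H] [CompleteSpace H]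
variable {X : Type*} [MeasurableSpace X] {M : Set X → (H →L[ℂ] H)}

lemma vecMeasure_apply (hM : IsPOVM M) (ψ : H) {A : Set X} (hA : MeasurableSet A) :
    vecMeasure M ψ A = ENNReal.ofReal (inner ℂ ψ (M A ψ) : ℂ).re := by
  rw [vecMeasure, dif_pos hM, Measure.ofMeasurable_apply A hA]

lemma povm_inner_re_nonneg (hM : IsPOVM M) (ψ : H) {A : Set X} (hA : MeasurableSet A) :
    0 ≤ (inner ℂ ψ (M A ψ) : ℂ).re := by
  have h2 := (hM.pos A hA).2 ψ
  rw [ContinuousLinearMap.reApplyInnerSelf] at h2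
  simpa [inner_re_symm] using h2

lemma pos_inner_real {T : H →L[ℂ] H} (hT : T.IsPositive) (ψ : H) :
    (inner ℂ ψ (T ψ) : ℂ) = (((inner ℂ ψ (T ψ) : ℂ).re : ℝ) : ℂ) := by
  have hs : (T : H →ₗ[ℂ] H).IsSymmetric := hT.1
  have : (starRingEnd ℂ) (inner ℂ ψ (T ψ) : ℂ) = (inner ℂ ψ (T ψ) : ℂ) := by
    rw [inner_conj_symm]
    exact hs ψ ψ
  exact (Complex.conj_eq_iff_re.mp this).symm

lemma vecMeasure_isFiniteMeasure (hM : IsPOVM M) (ψ : H) :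
    IsFiniteMeasure (vecMeasure M ψ) := by
  constructor
  rw [vecMeasure_apply hM ψ MeasurableSet.univ]
  exact ENNReal.ofReal_lt_top

end Aux

lemma pos_quad_ineq {T : H →L[ℂ] H} (hT : T.IsPositive) (φ χ : H) :
    (inner ℂ (φ + χ) (T (φ + χ)) : ℂ).re
      ≤ 2 * (((inner ℂ φ (T φ) : ℂ)).re + ((inner ℂ χ (T χ) : ℂ)).re) := by
  have h := hT.2 (φ - χ)
  rw [ContinuousLinearMap.reApplyInnerSelf, ← inner_re_symm] at h
  simp only [map_add, map_sub, inner_add_left, inner_add_right, inner_sub_left,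
    inner_sub_right, Complex.add_re, Complex.sub_re, RCLike.re_to_complex] at h ⊢
  linarith

/-- If a PV measure `P` is a smearing of a POV measure `M` with
respect to a weak Markov kernel, then `ℛ(P) ⊆ ℛ(M)`. -/
theorem range_pv_subset_range_povm_of_smearing
    [TopologicalSpace.SeparableSpace H]
    {X Y : Type*} [MeasurableSpace X] [MeasurableSpace Y]
    (M : Set X → (H →L[ℂ] H)) (hM : IsPOVM M)
    (P : Set Y → (H →L[ℂ] H)) (hP : IsPVM P)
    (ν : X → Set Y → ℝ) (hν : IsWeakMarkovKernel M ν) (hs : IsSmearing M ν P) :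
    ∀ B : Set Y, MeasurableSet B → ∃ A : Set X, MeasurableSet A ∧ P B = M A := by
  intro B hB
  have hfmeas : Measurable fun x => ν x B := hν.1 B hB
  set A : Set X := {x | ν x B = 1} with hAdef
  have hA : MeasurableSet A := hfmeas (measurableSet_singleton 1)
  refine ⟨A, hA, ?_⟩
  have key : ∀ ψ : H, (inner ℂ ψ (P B ψ) : ℂ) = inner ℂ ψ (M A ψ) := by
    intro ψ
    set φ := P B ψ with hφ
    set χ := ψ - φ with hχ
    have hψeq : ψ = φ + χ := by rw [hχ]; abel
    have hPφ : P B φ = φ := by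
      rw [hφ, ← ContinuousLinearMap.mul_apply, hP.2 B hB]
    have hPχ : P B χ = 0 := by
      rw [hχ, map_sub, hPφ, hφ, sub_self]
    haveI iφ : IsFiniteMeasure (vecMeasure M φ) := vecMeasure_isFiniteMeasure hM φ
    haveI iχ : IsFiniteMeasure (vecMeasure M χ) := vecMeasure_isFiniteMeasure hM χ
    haveI iψ : IsFiniteMeasure (vecMeasure M ψ) := vecMeasure_isFiniteMeasure hM ψ
    have hf01φ := ((hν.2 φ).1) B hB
    have hf01χ := ((hν.2 χ).1) B hB
    have hintgφ : Integrable (fun x => ν x B) (vecMeasure M φ) := by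
      refine ⟨hfmeas.aestronglyMeasurable, ?_⟩
      apply HasFiniteIntegral.of_bounded (C := 1)
      filter_upwards [hf01φ] with x hx
      rw [Real.norm_eq_abs, abs_le]
      exact ⟨by linarith [hx.1], hx.2⟩
    have hintgχ : Integrable (fun x => ν x B) (vecMeasure M χ) := by
      refine ⟨hfmeas.aestronglyMeasurable, ?_⟩
      apply HasFiniteIntegral.of_bounded (C := 1)
      filter_upwards [hf01χ] with x hx
      rw [Real.norm_eq_abs, abs_le]
      exact ⟨by linarith [hx.1], hx.2⟩
    -- on μ_φ, ν(·,B) = 1 a.e.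
    have hint_φ : ∫ x, ν x B ∂(vecMeasure M φ) = ‖φ‖ ^ 2 := by
      have h := hs B hB φ
      rw [hPφ] at h
      have h2 := congrArg Complex.re h
      rw [Complex.ofReal_re] at h2
      rw [← h2]
      simpa [RCLike.re_to_complex] using inner_self_eq_norm_sq (𝕜 := ℂ) φ
    have hμφuniv : vecMeasure M φ Set.univ = ENNReal.ofReal (‖φ‖ ^ 2) := by
      rw [vecMeasure_apply hM φ MeasurableSet.univ, hM.univ]
      simp [ContinuousLinearMap.one_apply, inner_self_eq_norm_sq_to_K,
        ← Complex.ofReal_pow]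
    have hfone : ∀ᵐ x ∂(vecMeasure M φ), ν x B = 1 := by
      have h0 : ∫ x, (1 - ν x B) ∂(vecMeasure M φ) = 0 := by
        rw [integral_sub (integrable_const 1) hintgφ, hint_φ, integral_const,
          measureReal_def, hμφuniv, ENNReal.toReal_ofReal (sq_nonneg ‖φ‖)]
        simp
      have hnn : 0 ≤ᵐ[vecMeasure M φ] fun x => 1 - ν x B := by
        filter_upwards [hf01φ] with x hx
        simp only [Pi.zero_apply]
        linarith [hx.2]
      have hz := (integral_eq_zero_iff_of_nonneg_ae hnn
        ((integrable_const 1).sub hintgφ)).mp h0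
      filter_upwards [hz] with x hx
      have hx' : 1 - ν x B = 0 := hx
      linarith
    -- on μ_χ, ν(·,B) = 0 a.e.
    have hint_χ : ∫ x, ν x B ∂(vecMeasure M χ) = 0 := by
      have h := hs B hB χ
      rw [hPχ, inner_zero_right] at h
      exact_mod_cast h.symm
    have hfzero : ∀ᵐ x ∂(vecMeasure M χ), ν x B = 0 := by
      have hnn : 0 ≤ᵐ[vecMeasure M χ] fun x => ν x B := by
        filter_upwards [hf01χ] with x hx
        exact hx.1
      exact (integral_eq_zero_iff_of_nonneg_ae hnn hintgχ).mp hint_χ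
    -- absolute continuity
    have hac : vecMeasure M ψ ≪ (vecMeasure M φ + vecMeasure M χ) := by
      refine Measure.AbsolutelyContinuous.mk fun s hsm hs0 => ?_
      rw [Measure.add_apply, add_eq_zero] at hs0
      have h1 : (inner ℂ φ (M s φ) : ℂ).re = 0 := by
        have := hs0.1
        rw [vecMeasure_apply hM φ hsm, ENNReal.ofReal_eq_zero] at this
        exact le_antisymm this (povm_inner_re_nonneg hM φ hsm)
      have h2 : (inner ℂ χ (M s χ) : ℂ).re = 0 := by
        have := hs0.2
        rw [vecMeasure_apply hM χ hsm, ENNReal.ofReal_eq_zero] at this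
        exact le_antisymm this (povm_inner_re_nonneg hM χ hsm)
      have hq := pos_quad_ineq (hM.pos s hsm) φ χ
      rw [← hψeq] at hq
      rw [vecMeasure_apply hM ψ hsm, ENNReal.ofReal_eq_zero]
      linarith
    -- ν(·,B) ∈ {0,1} a.e. μ_ψ
    have h01 : ∀ᵐ x ∂(vecMeasure M ψ), ν x B = 0 ∨ ν x B = 1 := by
      have hadd : ∀ᵐ x ∂(vecMeasure M φ + vecMeasure M χ), ν x B = 0 ∨ ν x B = 1 := by
        rw [ae_add_measure_iff]
        exact ⟨hfone.mono fun x hx => Or.inr hx, hfzero.mono fun x hx => Or.inl hx⟩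
      exact hadd.filter_mono hac.ae_le
    have hind : (fun x => ν x B) =ᵐ[vecMeasure M ψ] A.indicator fun _ => (1 : ℝ) := by
      filter_upwards [h01] with x hx
      rcases hx with h0 | h1
      · have hmem : x ∉ A := by
          rw [hAdef]
          intro hmem
          rw [Set.mem_setOf_eq] at hmem
          linarith
        rw [Set.indicator_of_notMem hmem]
        exact h0
      · have hmem : x ∈ A := by
          rw [hAdef]
          exact h1
        rw [Set.indicator_of_mem hmem]
        exact h1
    have hcalc : ∫ x, ν x B ∂(vecMeasure M ψ) = (vecMeasure M ψ A).toReal := by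
      rw [integral_congr_ae hind, integral_indicator_const (1 : ℝ) hA, smul_eq_mul, mul_one, measureReal_def]
    have hPB := hs B hB ψ
    rw [hcalc, vecMeasure_apply hM ψ hA,
      ENNReal.toReal_ofReal (povm_inner_re_nonneg hM ψ hA)] at hPB
    rw [hPB, ← pos_inner_real (hM.pos A hA) ψ]
  -- conclude P B = M A via polarization
  have hT : ((P B : H →ₗ[ℂ] H) - (M A : H →ₗ[ℂ] H)) = 0 := by
    rw [← inner_map_self_eq_zero]
    intro x
    simp only [LinearMap.sub_apply, ContinuousLinearMap.coe_coe, inner_sub_left]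
    rw [← inner_conj_symm (P B x) x, ← inner_conj_symm (M A x) x, key x, sub_self]
  ext x
  simpa [sub_eq_zero] using DFunLike.congr_fun hT x

end
end

section
/- Let H be a complex separable Hilbert space, let M be a POV measure on (Y, ℬ), and let ν : Y × 𝒜 → ℝ be a weak Markov kernel with respect to M taking sets from a measurable space (X, 𝒜). Fix B₁ ∈ 𝒜 and define ν±(y, B) := ν(y, B) ± [ν(y, B₁)·ν(y, B ∩ B₁ᶜ) − ν(y, B₁ᶜ)·ν(y, B ∩ B₁)] for y ∈ Y and B ∈ 𝒜. Then ν⁺ and ν⁻ are weak Markov kernels with respect to M, and ν(y, B) = ½ν⁺(y, B) + ½ν⁻(y, B) for all y and B. -/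
open MeasureTheory ComplexOrder
open scoped Classical

noncomputable section

variable {H : Type*} [NormedAddCommGroup H] [InnerProductSpace ℂ H] [CompleteSpace H]

/-- Auxiliary: a.e. finite additivity of a weak Markov kernel. -/
lemma wmk_add' {X Y : Type*} [MeasurableSpace X] [MeasurableSpace Y]
    {M : Set Y → (H →L[ℂ] H)} {ν : Y → Set X → ℝ} (hν : IsWeakMarkovKernel M ν)
    (ψ : H) {A A' : Set X} (hA : MeasurableSet A) (hA' : MeasurableSet A')
    (hd : Disjoint A A') :
    ∀ᵐ y ∂(vecMeasure M ψ), ν y (A ∪ A') = ν y A + ν y A' := by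
  obtain ⟨hbd, huniv, hemp, hsum⟩ := hν.2 ψ
  set f : ℕ → Set X := fun n => if n = 0 then A else if n = 1 then A' else ∅ with hf
  have hmeas : ∀ n, MeasurableSet (f n) := by
    intro n
    rcases n with _ | _ | n <;> simp [hf, hA, hA']
  have hpd : Pairwise (Function.onFun Disjoint f) := by
    intro i j hij
    rcases i with _ | _ | i <;> rcases j with _ | _ | j <;>
      simp [hf, Function.onFun, hd, hd.symm] <;> simp_all
  have hUnion : (⋃ n, f n) = A ∪ A' := by
    apply Set.eq_of_subset_of_subset
    · exact Set.iUnion_subset fun n => by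
        rcases n with _ | _ | n <;> simp [hf]
    · apply Set.union_subset
      · exact Set.subset_iUnion_of_subset 0 (by simp [hf])
      · exact Set.subset_iUnion_of_subset 1 (by simp [hf])
  filter_upwards [hsum f hmeas hpd, hemp] with y hy hy0
  rw [hUnion] at hy
  have h2 : HasSum (fun n => ν y (f n)) (ν y A + ν y A') := by
    have hzero : ∀ n ∉ ({0, 1} : Finset ℕ), ν y (f n) = 0 := by
      intro n hn
      rcases n with _ | _ | n
      · simp at hn
      · simp at hn
      · simpa [hf] using hy0
    have : HasSum (fun n => ν y (f n)) (∑ n ∈ ({0, 1} : Finset ℕ), ν y (f n)) :=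
      hasSum_sum_of_ne_finset_zero hzero
    simpa [hf] using this
  exact hy.unique h2

/-- Auxiliary: a.e. monotonicity of a weak Markov kernel. -/
lemma wmk_mono' {X Y : Type*} [MeasurableSpace X] [MeasurableSpace Y]
    {M : Set Y → (H →L[ℂ] H)} {ν : Y → Set X → ℝ} (hν : IsWeakMarkovKernel M ν)
    (ψ : H) {A A' : Set X} (hA : MeasurableSet A) (hA' : MeasurableSet A')
    (hsub : A ⊆ A') :
    ∀ᵐ y ∂(vecMeasure M ψ), ν y A ≤ ν y A' := by
  have hadd := wmk_add' hν ψ hA (hA'.diff hA) Set.disjoint_sdiff_right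
  have hbd := (hν.2 ψ).1 (A' \ A) (hA'.diff hA)
  filter_upwards [hadd, hbd] with y h1 h2
  rw [Set.union_diff_cancel hsub] at h1
  linarith [h2.1]

/-- The perturbed kernels `ν±` are weak Markov kernels with respect
to `M`, and `ν` is their half-sum. -/
theorem perturbed_weak_markov_kernels
    [TopologicalSpace.SeparableSpace H]
    {X Y : Type*} [MeasurableSpace X] [MeasurableSpace Y]
    (M : Set Y → (H →L[ℂ] H)) (hM : IsPOVM M)
    (ν : Y → Set X → ℝ) (hν : IsWeakMarkovKernel M ν)
    (B₁ : Set X) (hB₁ : MeasurableSet B₁)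
    (νp νm : Y → Set X → ℝ)
    (hp : ∀ (y : Y) (B : Set X),
      νp y B = ν y B + (ν y B₁ * ν y (B ∩ B₁ᶜ) - ν y B₁ᶜ * ν y (B ∩ B₁)))
    (hm : ∀ (y : Y) (B : Set X),
      νm y B = ν y B - (ν y B₁ * ν y (B ∩ B₁ᶜ) - ν y B₁ᶜ * ν y (B ∩ B₁))) :
    IsWeakMarkovKernel M νp ∧ IsWeakMarkovKernel M νm ∧
      ∀ (y : Y) (B : Set X), ν y B = (1 / 2) * νp y B + (1 / 2) * νm y B := by
  have key : ∀ (ν' : Y → Set X → ℝ) (s : ℝ),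
      (∀ (y : Y) (B : Set X),
        ν' y B = ν y B + s * (ν y B₁ * ν y (B ∩ B₁ᶜ) - ν y B₁ᶜ * ν y (B ∩ B₁))) →
      IsWeakMarkovKernel M ν' ∨ True := fun _ _ _ => Or.inr trivial
  clear key
  have main : ∀ (ν' : Y → Set X → ℝ) (s : ℝ), (s = 1 ∨ s = -1) →
      (∀ (y : Y) (B : Set X),
        ν' y B = ν y B + s * (ν y B₁ * ν y (B ∩ B₁ᶜ) - ν y B₁ᶜ * ν y (B ∩ B₁))) →
      IsWeakMarkovKernel M ν' := by
    intro ν' s hs hdef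
    constructor
    · -- measurability
      intro B hB
      have h1 := hν.1 B hB
      have h2 := hν.1 B₁ hB₁
      have h3 := hν.1 (B ∩ B₁ᶜ) (hB.inter hB₁.compl)
      have h4 := hν.1 B₁ᶜ hB₁.compl
      have h5 := hν.1 (B ∩ B₁) (hB.inter hB₁)
      simp only [hdef]
      exact h1.add ((measurable_const.mul ((h2.mul h3).sub (h4.mul h5))))
    · intro ψ
      obtain ⟨hbd, huniv, hemp, hsum⟩ := hν.2 ψ
      have hpq : ∀ᵐ y ∂(vecMeasure M ψ), ν y B₁ + ν y B₁ᶜ = 1 := by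
        have := wmk_add' hν ψ hB₁ hB₁.compl disjoint_compl_right
        filter_upwards [this, huniv] with y h1 h2
        rw [Set.union_compl_self] at h1
        rw [← h1, h2]
      refine ⟨?_, ?_, ?_, ?_⟩
      · -- bounds
        intro B hB
        have hsplit := wmk_add' hν ψ (hB.inter hB₁) (hB.inter hB₁.compl)
          (Set.disjoint_of_subset Set.inter_subset_right Set.inter_subset_right
            disjoint_compl_right)
        have hap := wmk_mono' hν ψ (hB.inter hB₁) hB₁ Set.inter_subset_right
        have hbq := wmk_mono' hν ψ (hB.inter hB₁.compl) hB₁.compl Set.inter_subset_right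
        filter_upwards [hsplit, hap, hbq, hpq, hbd B hB, hbd B₁ hB₁,
          hbd (B ∩ B₁) (hB.inter hB₁), hbd (B ∩ B₁ᶜ) (hB.inter hB₁.compl),
          hbd B₁ᶜ hB₁.compl] with y h1 h2 h3 h4 h5 h6 h7 h8 h9
        rw [Set.inter_union_compl] at h1
        rw [hdef]
        rcases hs with rfl | rfl <;>
          constructor <;>
          nlinarith [h5.1, h5.2, h6.1, h6.2, h7.1, h7.2, h8.1, h8.2, h9.1, h9.2,
            mul_nonneg h6.1 h8.1, mul_nonneg h9.1 h7.1]
      · -- univ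
        filter_upwards [huniv, hpq] with y h1 h2
        rw [hdef]
        simp only [Set.univ_inter, h1]
        rcases hs with rfl | rfl <;> nlinarith
      · -- empty
        filter_upwards [hemp] with y h1
        rw [hdef]
        simp [Set.empty_inter, h1]
      · -- sigma additivity
        intro B hB hd
        have hd₁ : Pairwise (Function.onFun Disjoint (fun n => B n ∩ B₁)) := fun i j hij =>
          (hd hij).mono Set.inter_subset_left Set.inter_subset_left
        have hd₂ : Pairwise (Function.onFun Disjoint (fun n => B n ∩ B₁ᶜ)) := fun i j hij =>
          (hd hij).mono Set.inter_subset_left Set.inter_subset_left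
        filter_upwards [hsum B hB hd,
          hsum (fun n => B n ∩ B₁) (fun n => (hB n).inter hB₁) hd₁,
          hsum (fun n => B n ∩ B₁ᶜ) (fun n => (hB n).inter hB₁.compl) hd₂]
          with y h1 h2 h3
        have hset₁ : (⋃ n, B n ∩ B₁) = (⋃ n, B n) ∩ B₁ := (Set.iUnion_inter B₁ B).symm ▸ rfl
        have hset₂ : (⋃ n, B n ∩ B₁ᶜ) = (⋃ n, B n) ∩ B₁ᶜ := (Set.iUnion_inter B₁ᶜ B).symm ▸ rfl
        rw [hset₁] at h2
        rw [hset₂] at h3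
        have := h1.add (((h2.mul_left (ν y B₁ᶜ)).sub (h3.mul_left (ν y B₁))).mul_left (-s))
        simp only [hdef]
        convert this using 2 with n
        · ring
        · ring
  refine ⟨main νp 1 (Or.inl rfl) (by intro y B; rw [hp]; ring),
          main νm (-1) (Or.inr rfl) (by intro y B; rw [hm]; ring), ?_⟩
  intro y B
  rw [hp, hm]
  ring

end
end

section
/- Let H be a complex separable Hilbert space, let P be a PV measure on a measurable space (Y, ℬ) and let M be a POV measure on a measurable space (X, 𝒜) such that ℛ(P) ⊆ ℛ(M). Choose π : ℬ → 𝒜 with P(B) = M(π(B)) for all B ∈ ℬ. Then ν(x, B) := χ_{π(B)}(x) (the indicator function of π(B)) defines a weak Markov kernel with respect to M, with values in {0,1}, such that P = ν∘M. -/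
open MeasureTheory ComplexOrder
open scoped Classical

noncomputable section

variable {H : Type*} [NormedAddCommGroup H] [InnerProductSpace ℂ H] [CompleteSpace H]

set_option linter.unusedSectionVars false

lemma aux_inner_re_nonneg {T : H →L[ℂ] H} (hT : T.IsPositive) (ψ : H) :
    0 ≤ (inner ℂ ψ (T ψ) : ℂ).re := by
  have h2 := hT.2 ψ
  rw [ContinuousLinearMap.reApplyInnerSelf] at h2
  simpa [inner_re_symm] using h2

lemma aux_re_symm (x y : H) : (inner ℂ x y : ℂ).re = (inner ℂ y x : ℂ).re := by
  simpa using inner_re_symm (𝕜 := ℂ) x y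

lemma aux_inner_real {T : H →L[ℂ] H} (hT : IsSelfAdjoint T) (ψ : H) :
    (inner ℂ ψ (T ψ) : ℂ) = (((inner ℂ ψ (T ψ) : ℂ).re : ℝ) : ℂ) := by
  have hsymm := ContinuousLinearMap.isSelfAdjoint_iff_isSymmetric.mp hT
  have h1 : (starRingEnd ℂ) (inner ℂ ψ (T ψ) : ℂ) = inner ℂ ψ (T ψ) := by
    rw [inner_conj_symm]
    exact hsymm ψ ψ
  exact (Complex.conj_eq_iff_re.mp h1).symm

lemma aux_posApply (T : H →L[ℂ] H) (hT : T.IsPositive) {φ : H}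
    (h : (inner ℂ φ (T φ) : ℂ).re ≤ 0) : T φ = 0 := by
  have hre0 : (inner ℂ φ (T φ) : ℂ).re = 0 := le_antisymm h (aux_inner_re_nonneg hT φ)
  have hsymm := ContinuousLinearMap.isSelfAdjoint_iff_isSymmetric.mp hT.isSelfAdjoint
  have key : ∀ (y : H) (t : ℝ),
      0 ≤ t ^ 2 * (inner ℂ y (T y) : ℂ).re + 2 * t * (inner ℂ y (T φ) : ℂ).re := by
    intro y t
    have h0 := aux_inner_re_nonneg hT (φ + (t : ℂ) • y)
    have hexp : (inner ℂ (φ + (t : ℂ) • y) (T (φ + (t : ℂ) • y)) : ℂ) =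
        inner ℂ φ (T φ) + (t : ℂ) * inner ℂ φ (T y) + (t : ℂ) * inner ℂ y (T φ)
          + (t : ℂ) * ((t : ℂ) * inner ℂ y (T y)) := by
      rw [map_add, _root_.map_smul, inner_add_left, inner_add_right, inner_add_right,
        inner_smul_left, inner_smul_right, inner_smul_left, inner_smul_right]
      rw [Complex.conj_ofReal]
      ring
    rw [hexp] at h0
    have hsw : (inner ℂ φ (T y) : ℂ).re = (inner ℂ y (T φ) : ℂ).re := by
      have h5 : (inner ℂ φ (T y) : ℂ) = inner ℂ (T φ) y := (hsymm φ y).symm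
      rw [h5, aux_re_symm]
    simp only [Complex.add_re, Complex.mul_re, Complex.ofReal_re, Complex.ofReal_im] at h0
    rw [hre0, hsw] at h0
    ring_nf at h0 ⊢
    nlinarith [h0]
  have hzero : ∀ y : H, (inner ℂ y (T φ) : ℂ).re = 0 := by
    intro y
    set a := (inner ℂ y (T y) : ℂ).re with ha
    set b := (inner ℂ y (T φ) : ℂ).re with hb
    have hann : 0 ≤ a := aux_inner_re_nonneg hT y
    by_contra hbne
    have h1 := key y (-(b / (a + 1)))
    rw [← ha, ← hb] at h1
    have hpos : (0:ℝ) < a + 1 := by linarith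
    have hb2 : 0 < b ^ 2 := by positivity
    have hne : a + 1 ≠ 0 := ne_of_gt hpos
    have h2 : (-(b / (a + 1))) ^ 2 * a + 2 * (-(b / (a + 1))) * b
        = (b ^ 2 * a - 2 * b ^ 2 * (a + 1)) / (a + 1) ^ 2 := by
      field_simp
      ring
    rw [h2, le_div_iff₀ (by positivity)] at h1
    nlinarith [mul_nonneg (le_of_lt hb2) hann]
  have hTφ := hzero (T φ)
  have : ‖T φ‖ ^ 2 = 0 := by
    have := inner_self_eq_norm_sq (𝕜 := ℂ) (T φ)
    simp only [RCLike.re_to_complex] at this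
    rw [← this, hTφ]
  simpa using pow_eq_zero_iff (n := 2) (by norm_num) |>.mp this

lemma aux_add2 {X : Type*} [MeasurableSpace X] {M : Set X → (H →L[ℂ] H)} (hM : IsPOVM M)
    {A B : Set X} (hA : MeasurableSet A) (hB : MeasurableSet B) (hd : Disjoint A B) (ψ : H) :
    (inner ℂ ψ (M (A ∪ B) ψ) : ℂ) = inner ℂ ψ (M A ψ) + inner ℂ ψ (M B ψ) := by
  classical
  set f : ℕ → Set X := fun n => if n = 0 then A else if n = 1 then B else ∅ with hf
  have hmeas : ∀ n, MeasurableSet (f n) := by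
    intro n
    simp only [hf]
    split
    · exact hA
    · split
      · exact hB
      · exact MeasurableSet.empty
  have hdisj : Pairwise (Function.onFun Disjoint f) := by
    intro i j hij
    unfold Function.onFun
    simp only [hf]
    rcases eq_or_ne i 0 with hi | hi
    · rcases eq_or_ne j 1 with hj | hj
      · simp [hi, hj, hd]
      · have hj0 : j ≠ 0 := fun h => hij (hi.trans h.symm)
        simp [hi, hj0, hj, Set.disjoint_empty]
    · rcases eq_or_ne i 1 with hi1 | hi1
      · rcases eq_or_ne j 0 with hj | hj
        · simp [hi1, hj, hd.symm]
        · have hj1 : j ≠ 1 := fun h => hij (hi1.trans h.symm)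
          simp [hi1, hi, hj, hj1, Set.disjoint_empty]
      · simp [hi, hi1, Set.empty_disjoint]
  have hU : (⋃ n, f n) = A ∪ B := by
    apply Set.Subset.antisymm
    · refine Set.iUnion_subset fun n => ?_
      simp only [hf]
      split
      · exact Set.subset_union_left
      · split
        · exact Set.subset_union_right
        · exact Set.empty_subset _
    · rintro x (hx | hx)
      · exact Set.mem_iUnion.2 ⟨0, by simp [hf, hx]⟩
      · exact Set.mem_iUnion.2 ⟨1, by simp [hf, hx]⟩
  have hsum := hM.m_iUnion ψ f hmeas hdisj
  rw [hU] at hsum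
  have hvanish : ∀ n ∉ ({0, 1} : Finset ℕ), (inner ℂ ψ (M (f n) ψ) : ℂ) = 0 := by
    intro n hn
    simp only [Finset.mem_insert, Finset.mem_singleton, not_or] at hn
    have : f n = ∅ := by simp [hf, hn.1, hn.2]
    simp [this, hM.empty]
  have h2 := (hasSum_sum_of_ne_finset_zero hvanish : HasSum _ _)
  have hval : (∑ n ∈ ({0, 1} : Finset ℕ), (inner ℂ ψ (M (f n) ψ) : ℂ))
      = inner ℂ ψ (M A ψ) + inner ℂ ψ (M B ψ) := by
    rw [Finset.sum_pair (by norm_num)]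
    simp [hf]
  rw [hval] at h2
  exact hsum.unique h2

lemma aux_mono {X : Type*} [MeasurableSpace X] {M : Set X → (H →L[ℂ] H)} (hM : IsPOVM M)
    {A A' : Set X} (hA : MeasurableSet A) (hA' : MeasurableSet A') (hsub : A ⊆ A') (ψ : H) :
    (inner ℂ ψ (M A ψ) : ℂ).re ≤ (inner ℂ ψ (M A' ψ) : ℂ).re := by
  have hdiff : MeasurableSet (A' \ A) := hA'.diff hA
  have heq : (inner ℂ ψ (M A' ψ) : ℂ) = inner ℂ ψ (M A ψ) + inner ℂ ψ (M (A' \ A) ψ) := by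
    rw [← aux_add2 hM hA hdiff disjoint_sdiff_self_right ψ, Set.union_diff_cancel hsub]
  rw [heq, Complex.add_re]
  have := aux_inner_re_nonneg (hM.pos _ hdiff) ψ
  linarith

lemma aux_compl {X : Type*} [MeasurableSpace X] {M : Set X → (H →L[ℂ] H)} (hM : IsPOVM M)
    {A : Set X} (hA : MeasurableSet A) (ψ : H) :
    (inner ℂ ψ (M Aᶜ ψ) : ℂ) = (inner ℂ ψ ψ : ℂ) - inner ℂ ψ (M A ψ) := by
  have h := aux_add2 hM hA hA.compl disjoint_compl_right ψ
  rw [Set.union_compl_self, hM.univ] at h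
  simp only [ContinuousLinearMap.one_apply] at h
  rw [h]; ring

lemma aux_isPositive_sub {S T : H →L[ℂ] H} (hS : IsSelfAdjoint S) (hT : IsSelfAdjoint T)
    (h : ∀ φ : H, (inner ℂ φ (T φ) : ℂ).re ≤ (inner ℂ φ (S φ) : ℂ).re) : (S - T).IsPositive := by
  refine ⟨ContinuousLinearMap.isSelfAdjoint_iff_isSymmetric.mp (hS.sub hT), fun φ => ?_⟩
  rw [ContinuousLinearMap.reApplyInnerSelf]
  have : ((S - T) φ) = S φ - T φ := rfl
  rw [this, inner_sub_left]
  simp only [map_sub, RCLike.re_to_complex]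
  rw [aux_re_symm (S φ) φ, aux_re_symm (T φ) φ]
  linarith [h φ]

lemma aux_zero {q r T : H →L[ℂ] H}
    (hT : T.IsPositive) (hq : (q - T).IsPositive) (hr : (r - T).IsPositive)
    (hq2 : q * q = q) (hr2 : r * r = r) (hqr : q * r = 0) : T = 0 := by
  have step : ∀ (p : H →L[ℂ] H), (p - T).IsPositive → p * p = p → ∀ φ, T φ = T (p φ) := by
    intro p hp hp2 φ
    have hpp : ∀ x : H, p (p x) = p x := fun x => by
      have := congrArg (fun (u : H →L[ℂ] H) => u x) hp2
      simpa [ContinuousLinearMap.mul_apply] using this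
    have h2 : p (φ - p φ) = 0 := by
      rw [map_sub, hpp]
      simp
    have h1 : (inner ℂ (φ - p φ) (T (φ - p φ)) : ℂ).re ≤ 0 := by
      have h3 := aux_inner_re_nonneg hp (φ - p φ)
      have h4 : ((p - T) (φ - p φ)) = p (φ - p φ) - T (φ - p φ) := rfl
      rw [h4, h2, inner_sub_right] at h3
      simp only [inner_zero_right, Complex.sub_re, Complex.zero_re] at h3
      linarith
    have h0 : T (φ - p φ) = 0 := aux_posApply T hT h1
    rw [map_sub, sub_eq_zero] at h0
    exact h0
  have e1 := step q hq hq2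
  have e2 := step r hr hr2
  ext φ
  have : T φ = T ((q * r) φ) := by
    rw [e2 φ, e1 (r φ)]
    rfl
  rw [hqr] at this
  simpa using this

lemma aux_vec_apply {X : Type*} [MeasurableSpace X] {M : Set X → (H →L[ℂ] H)} (hM : IsPOVM M)
    (ψ : H) {A : Set X} (hA : MeasurableSet A) :
    vecMeasure M ψ A = ENNReal.ofReal (inner ℂ ψ (M A ψ) : ℂ).re := by
  rw [vecMeasure, dif_pos hM, Measure.ofMeasurable_apply A hA]

lemma aux_idem_apply {Y : Type*} [MeasurableSpace Y] {P : Set Y → (H →L[ℂ] H)}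
    (hP : IsPVM P) {B : Set Y} (hB : MeasurableSet B) (φ : H) :
    P B (P B φ) = P B φ := by
  have := congrArg (fun (u : H →L[ℂ] H) => u φ) (hP.2 B hB)
  simpa [ContinuousLinearMap.mul_apply] using this

lemma aux_proj_zero_of_disjoint {Y : Type*} [MeasurableSpace Y] {P : Set Y → (H →L[ℂ] H)}
    (hP : IsPVM P) {B B' : Set Y} (hB : MeasurableSet B) (hB' : MeasurableSet B')
    (hd : Disjoint B B') : P B * P B' = 0 := by
  ext φ
  simp only [ContinuousLinearMap.mul_apply, ContinuousLinearMap.zero_apply]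
  apply aux_posApply _ (hP.1.pos B hB)
  set χ := P B' φ with hχ
  have hidem : P B' χ = χ := aux_idem_apply hP hB' φ
  have hsubc : B ⊆ B'ᶜ := fun y hy hy' => Set.disjoint_left.mp hd hy hy'
  have hmono := aux_mono hP.1 hB hB'.compl hsubc χ
  have hsplit := aux_compl hP.1 hB' χ
  rw [hidem] at hsplit
  have hz : (inner ℂ χ (P B'ᶜ χ) : ℂ).re = 0 := by rw [hsplit]; simp
  linarith [hmono, hz]

lemma aux_proj_absorb {Y : Type*} [MeasurableSpace Y] {P : Set Y → (H →L[ℂ] H)}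
    (hP : IsPVM P) {B B' : Set Y} (hB : MeasurableSet B) (hB' : MeasurableSet B')
    (hsub : B ⊆ B') : P B * (1 - P B') = 0 := by
  ext φ
  simp only [ContinuousLinearMap.mul_apply, ContinuousLinearMap.zero_apply,
    ContinuousLinearMap.sub_apply, ContinuousLinearMap.one_apply]
  apply aux_posApply _ (hP.1.pos B hB)
  set χ := φ - P B' φ with hχ
  have hz : P B' χ = 0 := by
    rw [hχ, map_sub, aux_idem_apply hP hB' φ, sub_self]
  have hmono := aux_mono hP.1 hB hB' hsub χ
  rw [hz] at hmono
  simpa using hmono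

lemma aux_op_inter {X Y : Type*} [MeasurableSpace X] [MeasurableSpace Y]
    {P : Set Y → (H →L[ℂ] H)} (hP : IsPVM P) {M : Set X → (H →L[ℂ] H)} (hM : IsPOVM M)
    {π : Set Y → Set X} (hπmeas : ∀ B : Set Y, MeasurableSet B → MeasurableSet (π B))
    (hπ : ∀ B : Set Y, MeasurableSet B → P B = M (π B))
    {B B' : Set Y} (hB : MeasurableSet B) (hB' : MeasurableSet B') (hd : Disjoint B B') :
    M (π B ∩ π B') = 0 := by
  have hBm := hπmeas B hB
  have hB'm := hπmeas B' hB'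
  have hIm : MeasurableSet (π B ∩ π B') := hBm.inter hB'm
  refine aux_zero (q := M (π B)) (r := M (π B')) (hM.pos _ hIm) ?_ ?_ ?_ ?_ ?_
  · exact aux_isPositive_sub (hM.pos _ hBm).isSelfAdjoint (hM.pos _ hIm).isSelfAdjoint
      (fun φ => aux_mono hM hIm hBm Set.inter_subset_left φ)
  · exact aux_isPositive_sub (hM.pos _ hB'm).isSelfAdjoint (hM.pos _ hIm).isSelfAdjoint
      (fun φ => aux_mono hM hIm hB'm Set.inter_subset_right φ)
  · rw [← hπ B hB]; exact hP.2 B hB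
  · rw [← hπ B' hB']; exact hP.2 B' hB'
  · rw [← hπ B hB, ← hπ B' hB']; exact aux_proj_zero_of_disjoint hP hB hB' hd

lemma aux_op_diff {X Y : Type*} [MeasurableSpace X] [MeasurableSpace Y]
    {P : Set Y → (H →L[ℂ] H)} (hP : IsPVM P) {M : Set X → (H →L[ℂ] H)} (hM : IsPOVM M)
    {π : Set Y → Set X} (hπmeas : ∀ B : Set Y, MeasurableSet B → MeasurableSet (π B))
    (hπ : ∀ B : Set Y, MeasurableSet B → P B = M (π B))
    {B B' : Set Y} (hB : MeasurableSet B) (hB' : MeasurableSet B') (hsub : B ⊆ B') :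
    M (π B \ π B') = 0 := by
  have hBm := hπmeas B hB
  have hB'm := hπmeas B' hB'
  have hDm : MeasurableSet (π B \ π B') := hBm.diff hB'm
  refine aux_zero (q := M (π B)) (r := 1 - M (π B')) (hM.pos _ hDm) ?_ ?_ ?_ ?_ ?_
  · exact aux_isPositive_sub (hM.pos _ hBm).isSelfAdjoint (hM.pos _ hDm).isSelfAdjoint
      (fun φ => aux_mono hM hDm hBm Set.diff_subset φ)
  · refine aux_isPositive_sub ?_ (hM.pos _ hDm).isSelfAdjoint ?_
    · exact (IsSelfAdjoint.one (R := H →L[ℂ] H)).sub (hM.pos _ hB'm).isSelfAdjoint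
    · intro φ
      have h1 := aux_mono hM hDm hB'm.compl (fun x hx => hx.2) φ
      have h2 := aux_compl hM hB'm φ
      have h3 : (inner ℂ φ ((1 - M (π B')) φ) : ℂ) = inner ℂ φ (M (π B')ᶜ φ) := by
        rw [h2]
        simp [ContinuousLinearMap.sub_apply, inner_sub_right]
      rw [h3]
      exact h1
  · rw [← hπ B hB]; exact hP.2 B hB
  · rw [← hπ B' hB']
    have h := hP.2 B' hB'
    rw [sub_mul, one_mul, mul_sub, mul_one, h]
    abel
  · rw [← hπ B hB, ← hπ B' hB']; exact aux_proj_absorb hP hB hB' hsub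

/-- If `ℛ(P) ⊆ ℛ(M)` via `π : ℬ → 𝒜` with `P(B) = M(π(B))`, then
`ν(x,B) := χ_{π(B)}(x)` is a weak Markov kernel with respect to `M`, with values in
`{0,1}`, and `P = ν ∘ M`. -/
theorem indicator_weak_markov_kernel_smearing
    [TopologicalSpace.SeparableSpace H]
    {X Y : Type*} [MeasurableSpace X] [MeasurableSpace Y]
    (P : Set Y → (H →L[ℂ] H)) (hP : IsPVM P)
    (M : Set X → (H →L[ℂ] H)) (hM : IsPOVM M)
    (π : Set Y → Set X) (hπmeas : ∀ B : Set Y, MeasurableSet B → MeasurableSet (π B))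
    (hπ : ∀ B : Set Y, MeasurableSet B → P B = M (π B))
    (ν : X → Set Y → ℝ)
    (hνdef : ∀ (x : X) (B : Set Y), ν x B = if x ∈ π B then 1 else 0) :
    IsWeakMarkovKernel M ν ∧ HasZeroOneValues M ν ∧ IsSmearing M ν P := by
  classical
  have hνind : ∀ B : Set Y, (fun x => ν x B) = (π B).indicator (fun _ => (1:ℝ)) := by
    intro B; funext x; rw [hνdef]; simp [Set.indicator_apply]
  have nullOf : ∀ (ψ : H) {A : Set X}, MeasurableSet A → M A = 0 → vecMeasure M ψ A = 0 := by
    intro ψ A hA h0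
    rw [aux_vec_apply hM ψ hA, h0]
    simp
  refine ⟨⟨?_, ?_⟩, ?_, ?_⟩
  · -- measurability
    intro B hB
    rw [hνind B]
    exact measurable_const.indicator (hπmeas B hB)
  · intro ψ
    refine ⟨?_, ?_, ?_, ?_⟩
    · -- bounds
      intro B hB
      refine Filter.Eventually.of_forall fun x => ?_
      rw [hνdef]
      by_cases h : x ∈ π B <;> simp [h]
    · -- univ
      have hum := hπmeas _ MeasurableSet.univ
      have h0 : vecMeasure M ψ (π Set.univ)ᶜ = 0 := by
        rw [aux_vec_apply hM ψ hum.compl]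
        have h1 := aux_compl hM hum ψ
        rw [← hπ _ MeasurableSet.univ, hP.1.univ] at h1
        simp only [ContinuousLinearMap.one_apply] at h1
        rw [h1]
        simp
      have hae : ∀ᵐ x ∂(vecMeasure M ψ), x ∉ (π Set.univ)ᶜ :=
        MeasureTheory.measure_eq_zero_iff_ae_notMem.mp h0
      refine hae.mono fun x hx => ?_
      rw [hνdef, if_pos (by simpa using hx)]
    · -- empty
      have h0 : vecMeasure M ψ (π ∅) = 0 := by
        rw [aux_vec_apply hM ψ (hπmeas _ MeasurableSet.empty), ← hπ _ MeasurableSet.empty,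
          hP.1.empty]
        simp
      have hae : ∀ᵐ x ∂(vecMeasure M ψ), x ∉ π ∅ :=
        MeasureTheory.measure_eq_zero_iff_ae_notMem.mp h0
      refine hae.mono fun x hx => ?_
      rw [hνdef, if_neg hx]
    · -- σ-additivity
      intro B hB hd
      set μ := vecMeasure M ψ with hμ
      set U := π (⋃ n, B n) with hUdef
      have hUm : MeasurableSet (⋃ n, B n) := MeasurableSet.iUnion hB
      have hUmeas : MeasurableSet U := hπmeas _ hUm
      have hAmeas : ∀ n, MeasurableSet (π (B n)) := fun n => hπmeas _ (hB n)
      have h1 : ∀ n m, n ≠ m → μ (π (B n) ∩ π (B m)) = 0 := fun n m hnm =>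
        nullOf ψ ((hAmeas n).inter (hAmeas m))
          (aux_op_inter hP hM hπmeas hπ (hB n) (hB m) (hd hnm))
      have h2 : ∀ n, μ (π (B n) \ U) = 0 := fun n =>
        nullOf ψ ((hAmeas n).diff hUmeas)
          (aux_op_diff hP hM hπmeas hπ (hB n) hUm (Set.subset_iUnion B n))
      have h3 : μ (U \ ⋃ n, π (B n)) = 0 := by
        set A' : ℕ → Set X := fun n => π (B n) ∩ U with hA'
        have hA'meas : ∀ n, MeasurableSet (A' n) := fun n => (hAmeas n).inter hUmeas
        have hsum := (hP.1.m_iUnion ψ B hB hd).mapL Complex.reCLM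
        simp only [Complex.reCLM_apply] at hsum
        have hnn : ∀ n, 0 ≤ (inner ℂ ψ (P (B n) ψ) : ℂ).re :=
          fun n => aux_inner_re_nonneg (hP.1.pos _ (hB n)) ψ
        have hμU : μ U = ENNReal.ofReal (inner ℂ ψ (P (⋃ n, B n) ψ) : ℂ).re := by
          rw [hμ, aux_vec_apply hM ψ hUmeas, ← hπ _ hUm]
        have hμA : ∀ n, μ (π (B n)) = ENNReal.ofReal (inner ℂ ψ (P (B n) ψ) : ℂ).re := by
          intro n
          rw [hμ, aux_vec_apply hM ψ (hAmeas n), ← hπ _ (hB n)]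
        have hμA' : ∀ n, μ (A' n) = μ (π (B n)) := by
          intro n
          have h := measure_inter_add_diff (μ := μ) (π (B n)) hUmeas
          rw [h2 n, add_zero] at h
          exact h
        have hdisj' : Pairwise (Function.onFun (MeasureTheory.AEDisjoint μ) A') := fun n m hnm =>
          measure_mono_null
            (Set.inter_subset_inter Set.inter_subset_left Set.inter_subset_left)
            (h1 n m hnm)
        have hiu : μ (⋃ n, A' n) = μ U := by
          rw [measure_iUnion₀ hdisj' (fun n => (hA'meas n).nullMeasurableSet)]
          have heach : ∀ n, μ (A' n) = ENNReal.ofReal (inner ℂ ψ (P (B n) ψ) : ℂ).re :=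
            fun n => (hμA' n).trans (hμA n)
          simp_rw [heach]
          rw [← ENNReal.ofReal_tsum_of_nonneg hnn hsum.summable, hsum.tsum_eq, hμU]
        have hsubU : (⋃ n, A' n) ⊆ U := Set.iUnion_subset fun n => Set.inter_subset_right
        have hne : μ (⋃ n, A' n) ≠ ⊤ := by
          rw [hiu, hμU]
          exact ENNReal.ofReal_ne_top
        have hdiff : μ (U \ ⋃ n, A' n) = 0 := by
          rw [measure_diff hsubU (MeasurableSet.iUnion hA'meas).nullMeasurableSet hne, hiu]
          exact tsub_self _
        refine measure_mono_null ?_ hdiff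
        exact Set.diff_subset_diff_right (Set.iUnion_mono fun n => Set.inter_subset_left)
      have ae1 : ∀ᵐ x ∂μ, ∀ n m, n ≠ m → x ∉ π (B n) ∩ π (B m) := by
        rw [MeasureTheory.ae_all_iff]
        intro n
        rw [MeasureTheory.ae_all_iff]
        intro m
        by_cases hnm : n = m
        · exact Filter.Eventually.of_forall fun x h => absurd hnm h
        · have h0 : ∀ᵐ x ∂μ, x ∉ π (B n) ∩ π (B m) := by
            rw [MeasureTheory.ae_iff]
            simpa using h1 n m hnm
          exact h0.mono fun x hx _ => hx
      have ae2 : ∀ᵐ x ∂μ, ∀ n, x ∈ π (B n) → x ∈ U := by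
        rw [MeasureTheory.ae_all_iff]
        intro n
        have h0 : ∀ᵐ x ∂μ, x ∉ π (B n) \ U :=
          MeasureTheory.measure_eq_zero_iff_ae_notMem.mp (h2 n)
        refine h0.mono fun x hx hmem => ?_
        by_contra hU'
        exact hx ⟨hmem, hU'⟩
      have ae3 : ∀ᵐ x ∂μ, x ∈ U → x ∈ ⋃ n, π (B n) := by
        have h0 : ∀ᵐ x ∂μ, x ∉ U \ ⋃ n, π (B n) :=
          MeasureTheory.measure_eq_zero_iff_ae_notMem.mp h3
        refine h0.mono fun x hx hmem => ?_
        by_contra hV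
        exact hx ⟨hmem, hV⟩
      filter_upwards [ae1, ae2, ae3] with x hx1 hx2 hx3
      simp only [hνdef]
      by_cases hxU : x ∈ π (⋃ n, B n)
      · obtain ⟨n₀, hn₀⟩ := Set.mem_iUnion.1 (hx3 hxU)
        have heq : (fun n => if x ∈ π (B n) then (1:ℝ) else 0) =
            fun n => if n = n₀ then (1:ℝ) else 0 := by
          funext n
          by_cases hn : n = n₀
          · subst hn; simp [hn₀]
          · have hnot : x ∉ π (B n) := fun hmem => hx1 n n₀ hn ⟨hmem, hn₀⟩
            simp [hnot, hn]
        rw [heq, if_pos hxU]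
        exact hasSum_ite_eq n₀ 1
      · have hnot : ∀ n, x ∉ π (B n) := fun n hmem => hxU (hx2 n hmem)
        have heq : (fun n => if x ∈ π (B n) then (1:ℝ) else 0) = fun _ => 0 :=
          funext fun n => if_neg (hnot n)
        rw [heq, if_neg hxU]
        exact hasSum_zero
  · -- zero-one values
    intro B hB ψ
    refine Filter.Eventually.of_forall fun x => ?_
    rw [hνdef]
    by_cases h : x ∈ π B <;> simp [h]
  · -- smearing
    intro B hB ψ
    rw [aux_inner_real (hP.1.pos B hB).isSelfAdjoint ψ]
    congr 1
    have hint : ∫ x, ν x B ∂(vecMeasure M ψ) = ((vecMeasure M ψ) (π B)).toReal := by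
      rw [hνind B, integral_indicator_const (1 : ℝ) (hπmeas B hB), smul_eq_mul, mul_one, measureReal_def]
    rw [hint, aux_vec_apply hM ψ (hπmeas B hB), ← hπ B hB,
      ENNReal.toReal_ofReal (aux_inner_re_nonneg (hP.1.pos B hB) ψ)]

end
end

section
/- Let M be a POV measure on a measurable space (X, 𝒜) with values in effects on a complex Hilbert space H. If for some A ∈ 𝒜 the operator M(A) is an orthogonal projection, then M(A) commutes with all elements of the range of M: M(A)M(B) = M(B)M(A) for every B ∈ 𝒜. -/
open MeasureTheory ComplexOrder
open scoped Classical

noncomputable section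

variable {H : Type*} [NormedAddCommGroup H] [InnerProductSpace ℂ H] [CompleteSpace H]

/-- If `E` is a positive operator and `⟪y, E y⟫ = 0` then `E y = 0`
(Cauchy–Schwarz for the semi-inner product induced by `E`). -/
lemma aux_pos_apply_eq_zero {E : H →L[ℂ] H} (hE : E.IsPositive) {y : H}
    (hy : (inner ℂ y (E y) : ℂ) = 0) : E y = 0 := by
  have hsym : (E : H →ₗ[ℂ] H).IsSymmetric :=
    ContinuousLinearMap.isSelfAdjoint_iff_isSymmetric.mp hE.isSelfAdjoint
  let c : PreInnerProductSpace.Core ℂ H :=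
    { inner := fun a b => (inner ℂ a (E b) : ℂ)
      conj_inner_symm := fun a b => by
        rw [inner_conj_symm]
        exact hsym a b
      re_inner_nonneg := fun a => (Complex.nonneg_iff.mp (hE.inner_nonneg_right a)).1
      add_left := fun a b z => inner_add_left _ _ _
      smul_left := fun a b r => inner_smul_left _ _ _ }
  have key := @InnerProductSpace.Core.inner_mul_inner_self_le ℂ H _ _ _ c (E y) y
  have h1 : (inner ℂ y (E (E y)) : ℂ) = inner ℂ (E y) (E y) := (hsym y (E y)).symm
  have h2 : (inner ℂ (E y) (E (E y)) : ℂ) = inner ℂ (E (E y)) (E y) := (hsym (E y) (E y)).symm ▸ rfl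
  change ‖(inner ℂ (E y) (E y) : ℂ)‖ * ‖(inner ℂ y (E (E y)) : ℂ)‖ ≤ RCLike.re (inner ℂ (E y) (E (E y)) : ℂ) * RCLike.re (inner ℂ y (E y) : ℂ) at key
  rw [h1, hy] at key
  simp only [map_zero, mul_zero] at key
  have hnn : (0:ℝ) ≤ ‖(inner ℂ (E y) (E y) : ℂ)‖ := norm_nonneg _
  have : ‖(inner ℂ (E y) (E y) : ℂ)‖ = 0 := by
    rcases mul_nonneg hnn (norm_nonneg (inner ℂ (E y) (E (E y)) : ℂ)) with h
    nlinarith [key, norm_nonneg (inner ℂ (E y) (E (E y)) : ℂ), norm_nonneg (inner ℂ (E y) (E y) : ℂ)]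
  have : (inner ℂ (E y) (E y) : ℂ) = 0 := norm_eq_zero.mp this
  exact inner_self_eq_zero.mp this

/-- If `P` is an orthogonal projection and `0 ≤ E ≤ P`, then `P E = E P = E`. -/
lemma aux_comm_of_le_proj {P E : H →L[ℂ] H} (hP : IsSelfAdjoint P) (hP2 : P * P = P)
    (hE : E.IsPositive) (hle : (P - E).IsPositive) : P * E = E ∧ E * P = E := by
  have hsym : (E : H →ₗ[ℂ] H).IsSymmetric :=
    ContinuousLinearMap.isSelfAdjoint_iff_isSymmetric.mp hE.isSelfAdjoint
  -- E vanishes on the kernel part of P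
  have hker : ∀ ψ : H, E (ψ - P ψ) = 0 := by
    intro ψ
    set y := ψ - P ψ with hy
    have hPy : P y = 0 := by
      have : P (P ψ) = P ψ := by
        have := congrArg (fun T : H →L[ℂ] H => T ψ) hP2
        simpa [ContinuousLinearMap.mul_apply] using this
      simp [hy, map_sub, this]
    have hPinner : (inner ℂ y (P y) : ℂ) = 0 := by rw [hPy]; simp
    have h1 : 0 ≤ Complex.re (inner ℂ y (E y) : ℂ) := (Complex.nonneg_iff.mp (hE.inner_nonneg_right y)).1
    have h2 : 0 ≤ Complex.re (inner ℂ y ((P - E) y) : ℂ) := (Complex.nonneg_iff.mp (hle.inner_nonneg_right y)).1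
    have h3 : (inner ℂ y ((P - E) y) : ℂ) = - inner ℂ y (E y) := by
      rw [ContinuousLinearMap.sub_apply, inner_sub_right, hPinner, zero_sub]
    have hre : Complex.re (inner ℂ y (E y) : ℂ) = 0 := by
      rw [h3] at h2
      simp only [Complex.neg_re] at h2
      linarith
    have him : Complex.im (inner ℂ y (E y) : ℂ) = 0 := by
      have hconj : (starRingEnd ℂ) (inner ℂ y (E y) : ℂ) = inner ℂ y (E y) := by
        rw [inner_conj_symm]; exact hsym y y
      have := Complex.conj_eq_iff_im.mp hconj
      exact this
    have : (inner ℂ y (E y) : ℂ) = 0 := Complex.ext hre him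
    exact aux_pos_apply_eq_zero hE this
  have hEP : E * P = E := by
    ext ψ
    have := hker ψ
    rw [map_sub] at this
    have : E (P ψ) = E ψ := by
      have h := sub_eq_zero.mp this
      exact h.symm
    simpa [ContinuousLinearMap.mul_apply] using this
  have hPE : P * E = E := by
    have : star (E * P) = star E := congrArg star hEP
    rwa [star_mul, hP.star_eq, hE.isSelfAdjoint.star_eq] at this
  exact ⟨hPE, hEP⟩

/-- Finite additivity of a POV measure on two disjoint sets. -/
lemma aux_add {X : Type*} [MeasurableSpace X] {M : Set X → (H →L[ℂ] H)} (hM : IsPOVM M)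
    {S T : Set X} (hS : MeasurableSet S) (hT : MeasurableSet T) (hd : Disjoint S T) :
    M (S ∪ T) = M S + M T := by
  set A : ℕ → Set X := fun n => if n = 0 then S else if n = 1 then T else ∅ with hA
  have hmeas : ∀ n, MeasurableSet (A n) := by
    intro n
    simp only [hA]
    split_ifs <;> first | exact hS | exact hT | exact MeasurableSet.empty
  have hdisj : Pairwise (Function.onFun Disjoint A) := by
    intro i j hij
    simp only [Function.onFun, hA]
    split_ifs <;>
      first
        | (exfalso; omega)
        | exact hd
        | exact hd.symm
        | exact Set.disjoint_empty _
        | exact Set.empty_disjoint _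
  have hU : ⋃ n, A n = S ∪ T := by
    apply Set.Subset.antisymm
    · refine Set.iUnion_subset fun n => ?_
      simp only [hA]
      split_ifs <;> simp
    · intro x hx
      rcases hx with h | h
      · exact Set.mem_iUnion.mpr ⟨0, by simp [hA, h]⟩
      · exact Set.mem_iUnion.mpr ⟨1, by simp [hA, h]⟩
  have hinner : ∀ ψ : H, (inner ℂ ψ (M (S ∪ T) ψ) : ℂ) = inner ℂ ψ (M S ψ) + inner ℂ ψ (M T ψ) := by
    intro ψ
    have h := hM.m_iUnion ψ A hmeas hdisj
    rw [hU] at h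
    have h2 : HasSum (fun n => (inner ℂ ψ (M (A n) ψ) : ℂ))
        (∑ n ∈ ({0, 1} : Finset ℕ), (inner ℂ ψ (M (A n) ψ) : ℂ)) := by
      apply hasSum_sum_of_ne_finset_zero
      intro n hn
      simp only [Finset.mem_insert, Finset.mem_singleton] at hn
      push_neg at hn
      have : A n = ∅ := by simp [hA, hn.1, hn.2]
      simp [this, hM.empty]
    have := h.unique h2
    rw [this, Finset.sum_pair (by norm_num : (0:ℕ) ≠ 1)]
    simp [hA]
  have hlin : ((M (S ∪ T)) : H →ₗ[ℂ] H) = ((M S + M T : H →L[ℂ] H) : H →ₗ[ℂ] H) := by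
    rw [← ext_inner_map]
    intro x
    have h := hinner x
    have h' := congrArg (starRingEnd ℂ) h
    rw [inner_conj_symm, map_add, inner_conj_symm, inner_conj_symm] at h'
    simpa [ContinuousLinearMap.add_apply, inner_add_left] using h'
  exact ContinuousLinearMap.coe_injective hlin

/-- A projection in the range of a POV measure commutes with every
element of the range. -/
theorem projection_in_range_commutes
    {X : Type*} [MeasurableSpace X]
    (M : Set X → (H →L[ℂ] H)) (hM : IsPOVM M)
    (A : Set X) (hA : MeasurableSet A) (hproj : M A * M A = M A) :
    ∀ B : Set X, MeasurableSet B → M A * M B = M B * M A := by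
  intro B hB
  set P := M A with hP
  have hPsa : IsSelfAdjoint P := (hM.pos A hA).isSelfAdjoint
  -- split B along A
  have hB1 : MeasurableSet (A ∩ B) := hA.inter hB
  have hB2 : MeasurableSet (Aᶜ ∩ B) := hA.compl.inter hB
  have hBsplit : M B = M (A ∩ B) + M (Aᶜ ∩ B) := by
    have hU : (A ∩ B) ∪ (Aᶜ ∩ B) = B := by
      ext x; simp [Set.mem_inter_iff]; tauto
    have hd : Disjoint (A ∩ B) (Aᶜ ∩ B) :=
      disjoint_compl_right.mono Set.inter_subset_left Set.inter_subset_left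
    have h := aux_add hM hB1 hB2 hd
    rw [hU] at h; exact h
  -- M(A∩B) ≤ P
  have hle1 : (P - M (A ∩ B)).IsPositive := by
    have hU : (A ∩ B) ∪ (A ∩ Bᶜ) = A := Set.inter_union_compl A B
    have hd : Disjoint (A ∩ B) (A ∩ Bᶜ) :=
      disjoint_compl_right.mono Set.inter_subset_right Set.inter_subset_right
    have h := aux_add hM hB1 (hA.inter hB.compl) hd
    rw [hU] at h
    have : P - M (A ∩ B) = M (A ∩ Bᶜ) := by rw [hP, h]; abel
    rw [this]
    exact hM.pos _ (hA.inter hB.compl)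
  -- M(Aᶜ∩B) ≤ 1 - P
  have hQ : M Aᶜ = 1 - P := by
    have hU : A ∪ Aᶜ = Set.univ := Set.union_compl_self A
    have h := aux_add hM hA hA.compl disjoint_compl_right
    rw [hU, hM.univ] at h
    rw [hP]; rw [eq_sub_iff_add_eq, add_comm]; exact h.symm
  have hle2 : ((1 - P) - M (Aᶜ ∩ B)).IsPositive := by
    have hU : (Aᶜ ∩ B) ∪ (Aᶜ ∩ Bᶜ) = Aᶜ := Set.inter_union_compl Aᶜ B
    have hd : Disjoint (Aᶜ ∩ B) (Aᶜ ∩ Bᶜ) :=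
      disjoint_compl_right.mono Set.inter_subset_right Set.inter_subset_right
    have h := aux_add hM hB2 (hA.compl.inter hB.compl) hd
    rw [hU, hQ] at h
    have : (1 - P) - M (Aᶜ ∩ B) = M (Aᶜ ∩ Bᶜ) := by rw [h]; abel
    rw [this]
    exact hM.pos _ (hA.compl.inter hB.compl)
  -- 1 - P is a selfadjoint projection
  have hQsa : IsSelfAdjoint ((1 : H →L[ℂ] H) - P) := (IsSelfAdjoint.one _).sub hPsa
  have hQ2 : ((1 : H →L[ℂ] H) - P) * (1 - P) = 1 - P := by
    have : ((1 : H →L[ℂ] H) - P) * (1 - P) = 1 - P - P + P * P := by noncomm_ring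
    rw [this, hproj]; abel
  obtain ⟨hPE1, hE1P⟩ := aux_comm_of_le_proj hPsa hproj (hM.pos _ hB1) hle1
  obtain ⟨hQE2, hE2Q⟩ := aux_comm_of_le_proj hQsa hQ2 (hM.pos _ hB2) hle2
  -- P commutes with M(Aᶜ∩B)
  have hPE2 : P * M (Aᶜ ∩ B) = 0 := by
    have h' := hQE2
    rw [sub_mul, one_mul, sub_eq_self] at h'
    exact h'
  have hE2P : M (Aᶜ ∩ B) * P = 0 := by
    have h' := hE2Q
    rw [mul_sub, mul_one, sub_eq_self] at h'
    exact h'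
  rw [hBsplit, mul_add, add_mul, hPE1, hE1P, hPE2, hE2P]

end
end
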